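/- Let Γ, h, α, n, z_1, …, z_{n−1} and ϱ be as specified. Then C(0) (the span of E_1^n, …, E_n^n) and the line ℂ·E_1^n are invariant under the adjoint action γ·X = ϱ(γ) X ϱ(γ)^{−1} (indeed γ·E_1^n = α^{h(γ)} E_1^n), and there is a ℂ-linear isomorphism φ : ℂ[t^{±1}]/((t−1)^{n−1}) → C(0)/(ℂ·E_1^n), given on basis classes by (t−1)^l ↦ class of E_{n−l}^n for 0 ≤ l ≤ n−2, such that for every γ ∈ Γ and every p, φ(t^{h(γ)}·p) equals the class of ϱ(γ)·X·ϱ(γ)^{−1} where X is any lift of φ(p); i.e. φ intertwines multiplication by t^{h(γ)} with the induced adjoint action of γ. -/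

import Mathlib

open Matrix LaurentPolynomial

noncomputable section

/-- Generalized binomial coefficient C(m,k) for m : ℤ, as a complex number. -/
def gbinom (m : ℤ) (k : ℕ) : ℂ :=
  (∏ i ∈ Finset.range k, ((m : ℂ) - i)) / (Nat.factorial k)

/-- The n×n nilpotent Jordan matrix N. -/
def Nmat (n : ℕ) : Matrix (Fin n) (Fin n) ℂ :=
  Matrix.of fun i j => if (i : ℕ) + 1 = (j : ℕ) then 1 else 0

/-- The unipotent Jordan block J = I + N. -/
def Jmat (n : ℕ) : Matrix (Fin n) (Fin n) ℂ := 1 + Nmat n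

lemma Jmat_blockTriangular (n : ℕ) : (Jmat n).BlockTriangular id := by
  intro i j hij
  have hji : (j : ℕ) < (i : ℕ) := hij
  simp only [Jmat, Matrix.add_apply, Matrix.one_apply, Nmat, Matrix.of_apply]
  rw [if_neg (by intro h; subst h; exact lt_irrefl _ hji), if_neg (by omega)]
  simp

lemma Jmat_isUnit (n : ℕ) : IsUnit (Jmat n) := by
  rw [Matrix.isUnit_iff_isUnit_det,
    Matrix.det_of_upperTriangular (Jmat_blockTriangular n)]
  have : ∀ i : Fin n, Jmat n i i = 1 := by
    intro i
    simp [Jmat, Matrix.one_apply, Nmat]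
  simp [this]

/-- Integer powers of the unipotent Jordan block. -/
def Jz (n : ℕ) (m : ℤ) : Matrix (Fin n) (Fin n) ℂ :=
  (((Jmat_isUnit n).unit ^ m : (Matrix (Fin n) (Fin n) ℂ)ˣ) : Matrix (Fin n) (Fin n) ℂ)

/-- The representation ϱ : Γ → GL(n,ℂ), with `ϱ(γ)_{1,1} = α^{h(γ)}`,
`ϱ(γ)_{1,j} = z_{j−1}(γ)` for `2 ≤ j ≤ n`, `ϱ(γ)_{i,1} = 0` for `2 ≤ i ≤ n`, and
`ϱ(γ)_{i,j} = (J_{n−1}^{h(γ)})_{i−1,j−1}` for `2 ≤ i, j ≤ n` (1-based indices). -/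
def rhoMat (Γ : Type*) (α : ℂ) (n : ℕ) (h : Γ → ℤ) (z : Γ → ℕ → ℂ) (γ : Γ) :
    Matrix (Fin n) (Fin n) ℂ :=
  Matrix.of fun i j =>
    if hi : (i : ℕ) = 0 then
      (if (j : ℕ) = 0 then α ^ h γ else z γ (j : ℕ))
    else
      (if hj : (j : ℕ) = 0 then 0
       else Jz (n - 1) (h γ) ⟨(i : ℕ) - 1, by have := i.isLt; omega⟩
              ⟨(j : ℕ) - 1, by have := j.isLt; omega⟩)

/-- The subspace `C(i)` of `gl(n,ℂ)` of matrices whose columns of 0-based index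
`< n−1−i` vanish. -/
def Csub (n i : ℕ) : Submodule ℂ (Matrix (Fin n) (Fin n) ℂ) where
  carrier := {X | ∀ a b : Fin n, (b : ℕ) < n - 1 - i → X a b = 0}
  add_mem' := by
    intro X Y hX hY a b hb
    simp [Matrix.add_apply, hX a b hb, hY a b hb]
  zero_mem' := by intro a b hb; rfl
  smul_mem' := by
    intro c X hX a b hb
    simp [Matrix.smul_apply, hX a b hb]

lemma stdBasisMatrix_mem_Csub (n k : ℕ) (i j : Fin n) (hj : n - 1 - k ≤ (j : ℕ)) :
    Matrix.single i j (1 : ℂ) ∈ Csub n k := by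
  intro a b hb
  have hjb : j ≠ b := by
    intro hjb
    subst hjb
    omega
  simp [Matrix.single, Matrix.of_apply]
  intro _ hcontra
  exact absurd hcontra hjb


lemma Nmat_pow_apply (k l : ℕ) (i j : Fin k) :
    (Nmat k ^ l) i j = if (i : ℕ) + l = (j : ℕ) then 1 else 0 := by
  induction l generalizing j with
  | zero =>
    simp only [pow_zero, Matrix.one_apply, Fin.ext_iff, Nat.add_zero]
  | succ l ih =>
    rw [pow_succ, Matrix.mul_apply]
    by_cases hlt : (i : ℕ) + l < k
    · rw [Finset.sum_eq_single (⟨(i : ℕ) + l, hlt⟩ : Fin k)]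
      · rw [ih]
        simp only [Nmat, Matrix.of_apply]
        rw [if_pos trivial, one_mul,
          show (i : ℕ) + (l + 1) = (i : ℕ) + l + 1 from by omega]
      · intro b _ hb
        rw [ih, if_neg (fun hc => hb (Fin.ext hc.symm)), zero_mul]
      · simp
    · have h1 : ∀ b : Fin k, (Nmat k ^ l) i b * (Nmat k) b j = 0 := by
        intro b
        rw [ih, if_neg (by have := b.isLt; omega), zero_mul]
      rw [Finset.sum_congr rfl (fun b _ => h1 b), Finset.sum_const_zero,
        if_neg (by have := j.isLt; omega)]

lemma Nmat_pow_self (k : ℕ) : Nmat k ^ k = 0 := by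
  ext i j
  rw [Nmat_pow_apply, if_neg (by have := j.isLt; omega)]
  rfl

lemma Jz_add (k : ℕ) (a b : ℤ) : Jz k (a + b) = Jz k a * Jz k b := by
  unfold Jz
  rw [_root_.zpow_add, Units.val_mul]

lemma Jz_zero (k : ℕ) : Jz k 0 = 1 := by
  simp [Jz]

lemma Jz_one (k : ℕ) : Jz k 1 = Jmat k := by
  simp [Jz]

lemma Jz_isUnit (k : ℕ) (m : ℤ) : IsUnit (Jz k m) := ⟨_, rfl⟩

lemma lastRow_mul {k : ℕ} (A B : Matrix (Fin k) (Fin k) ℂ) (i : Fin k)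
    (hA : ∀ j, A i j = if j = i then 1 else 0) (j : Fin k) :
    (A * B) i j = B i j := by
  rw [Matrix.mul_apply]
  simp only [hA, ite_mul, one_mul, zero_mul]
  simp

lemma ite_val_eq {k : ℕ} (i : Fin k) (hik : (i : ℕ) + 1 = k) (j : Fin k) :
    (if (j : ℕ) + 1 = k then (1 : ℂ) else 0) = if j = i then 1 else 0 := by
  by_cases hc : j = i
  · subst hc; rw [if_pos hik, if_pos rfl]
  · rw [if_neg (fun hv => hc (Fin.ext (by omega))), if_neg hc]

lemma Jmat_lastRow (k : ℕ) (i j : Fin k) (hik : (i : ℕ) + 1 = k) :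
    Jmat k i j = if (j : ℕ) + 1 = k then 1 else 0 := by
  have hj := j.isLt
  simp only [Jmat, Matrix.add_apply, Matrix.one_apply, Nmat, Matrix.of_apply, Fin.ext_iff]
  by_cases hc : (j : ℕ) + 1 = k
  · rw [if_pos (by omega), if_neg (by omega), if_pos hc]; ring
  · rw [if_neg (by omega), if_neg (by omega), if_neg hc]; ring

lemma Jz_lastRow (k : ℕ) (m : ℤ) (i j : Fin k) (hik : (i : ℕ) + 1 = k) :
    Jz k m i j = if (j : ℕ) + 1 = k then 1 else 0 := by
  have hone : ∀ j : Fin k, (1 : Matrix (Fin k) (Fin k) ℂ) i j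
      = if (j : ℕ) + 1 = k then 1 else 0 := by
    intro j
    rw [Matrix.one_apply, (ite_val_eq i hik j)]
    by_cases hc : j = i
    · rw [if_pos hc.symm, if_pos hc]
    · rw [if_neg (fun hv => hc hv.symm), if_neg hc]
  have hneg : ∀ j : Fin k, Jz k (-1) i j = if (j : ℕ) + 1 = k then 1 else 0 := by
    intro j
    have h1 : Jmat k * Jz k (-1) = 1 := by
      have h2 := Jz_add k 1 (-1)
      rw [show (1 : ℤ) + -1 = 0 from by ring, Jz_zero, Jz_one] at h2
      exact h2.symm
    have h3 := lastRow_mul (Jmat k) (Jz k (-1)) i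
      (fun j' => (Jmat_lastRow k i j' hik).trans (ite_val_eq i hik j')) j
    rw [h1, hone j] at h3
    exact h3.symm
  induction m using Int.induction_on generalizing j with
  | zero => rw [Jz_zero, hone j]
  | succ i' ih =>
    rw [Jz_add, lastRow_mul _ _ _ (fun j' => (ih j').trans (ite_val_eq i hik j')) j,
      Jz_one, Jmat_lastRow k i j hik]
  | pred i' ih =>
    rw [show (-(i' : ℤ) - 1) = (-(i' : ℤ)) + (-1) from by ring, Jz_add,
      lastRow_mul _ _ _ (fun j' => (ih j').trans (ite_val_eq i hik j')) j, hneg]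

section Rho
variable {Γ : Type*} (α : ℂ) (m0 : ℕ) (h : Γ → ℤ) (z : Γ → ℕ → ℂ) (γ : Γ)

lemma rho_col0 (i j : Fin (m0 + 2)) (hj : (j : ℕ) = 0) :
    rhoMat Γ α (m0 + 2) h z γ i j = if (i : ℕ) = 0 then α ^ h γ else 0 := by
  by_cases hi : (i : ℕ) = 0
  · simp [rhoMat, hi, hj, Fin.val_eq_zero_iff.mp hi, Fin.val_eq_zero_iff.mp hj]
  · simp [rhoMat, hi, hj, mt Fin.val_eq_zero_iff.mpr hi, Fin.val_eq_zero_iff.mp hj]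

lemma rho_block (i j : Fin (m0 + 1)) :
    rhoMat Γ α (m0 + 2) h z γ i.succ j.succ = Jz (m0 + 1) (h γ) i j := by
  have hi : ((i.succ : Fin (m0 + 2)) : ℕ) = (i : ℕ) + 1 := rfl
  have hj : ((j.succ : Fin (m0 + 2)) : ℕ) = (j : ℕ) + 1 := rfl
  simp only [rhoMat, Matrix.of_apply, hi, hj]
  rw [dif_neg (by omega), dif_neg (by omega)]
  congr 1 <;> exact Fin.ext (by simp)

lemma rho_lastRow (i j : Fin (m0 + 2)) (hi : (i : ℕ) = m0 + 1) :
    rhoMat Γ α (m0 + 2) h z γ i j = if (j : ℕ) = m0 + 1 then 1 else 0 := by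
  by_cases hj : (j : ℕ) = 0
  · simp only [rhoMat, Matrix.of_apply]
    rw [dif_neg (by omega), dif_pos hj, if_neg (by omega)]
  · have hi2 : i = (⟨m0, by omega⟩ : Fin (m0 + 1)).succ := Fin.ext (by simp [hi])
    have hj2 : j = (⟨(j : ℕ) - 1, by have := j.isLt; omega⟩ : Fin (m0 + 1)).succ :=
      Fin.ext (by simp [Fin.val_succ]; omega)
    have hjlt := j.isLt
    rw [hi2, hj2, rho_block, Jz_lastRow (m0 + 1) (h γ) ⟨m0, by omega⟩ _ (by simp)]
    simp only [Fin.val_succ]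

lemma rho_det_isUnit (hα : α ≠ 0) : IsUnit (rhoMat Γ α (m0 + 2) h z γ).det := by
  rw [Matrix.det_succ_column_zero]
  rw [Finset.sum_eq_single (0 : Fin (m0 + 2))]
  · rw [rho_col0 α m0 h z γ 0 0 rfl, if_pos (show ((0 : Fin (m0 + 2)) : ℕ) = 0 from rfl)]
    have hsub : (rhoMat Γ α (m0 + 2) h z γ).submatrix (Fin.succAbove 0) Fin.succ
        = Jz (m0 + 1) (h γ) := by
      ext i j
      rw [Matrix.submatrix_apply, Fin.succAbove_zero, rho_block]
    rw [hsub]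
    simp only [Fin.val_zero, pow_zero, one_mul]
    exact ((zpow_ne_zero (h γ) hα).isUnit).mul
      ((Matrix.isUnit_iff_isUnit_det _).mp (Jz_isUnit _ _))
  · intro b _ hb
    rw [rho_col0 α m0 h z γ b 0 rfl, if_neg (fun hc => hb (Fin.ext (by simp [hc])))]
    ring
  · simp

lemma rho_isUnit (hα : α ≠ 0) : IsUnit (rhoMat Γ α (m0 + 2) h z γ) :=
  (Matrix.isUnit_iff_isUnit_det _).mpr (rho_det_isUnit α m0 h z γ hα)

lemma rhoInv_lastRow (hα : α ≠ 0) (i j : Fin (m0 + 2)) (hi : (i : ℕ) = m0 + 1) :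
    (rhoMat Γ α (m0 + 2) h z γ)⁻¹ i j = if (j : ℕ) = m0 + 1 then 1 else 0 := by
  have h1 : rhoMat Γ α (m0 + 2) h z γ * (rhoMat Γ α (m0 + 2) h z γ)⁻¹ = 1 :=
    Matrix.mul_nonsing_inv _ (rho_det_isUnit α m0 h z γ hα)
  have hik : (i : ℕ) + 1 = m0 + 2 := by omega
  have h2 := lastRow_mul (rhoMat Γ α (m0 + 2) h z γ) (rhoMat Γ α (m0 + 2) h z γ)⁻¹ i
    (fun j' => by
      rw [rho_lastRow α m0 h z γ i j' hi,
        show (if ((j' : Fin (m0+2)) : ℕ) = m0 + 1 then (1:ℂ) else 0)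
          = if ((j' : Fin (m0+2)) : ℕ) + 1 = m0 + 2 then 1 else 0 from by
            by_cases hc : ((j' : Fin (m0+2)) : ℕ) = m0 + 1
            · rw [if_pos hc, if_pos (by omega)]
            · rw [if_neg hc, if_neg (by omega)],
        ite_val_eq i hik j']) j
  rw [h1, Matrix.one_apply] at h2
  rw [← h2]
  by_cases hc : (j : ℕ) = m0 + 1
  · rw [if_pos (Fin.ext (by omega)), if_pos hc]
  · rw [if_neg (fun hv => hc (by have := congrArg Fin.val hv; omega)), if_neg hc]

end Rho

def vecToC (m0 : ℕ) : (Fin (m0 + 1) → ℂ) →ₗ[ℂ] Csub (m0 + 2) 0 where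
  toFun w := ⟨Matrix.of fun a b =>
      if (a : ℕ) = 0 then 0
      else if (b : ℕ) = m0 + 1 then w ⟨(a : ℕ) - 1, by have := a.isLt; omega⟩ else 0,
    by
      intro a b hb
      simp only [Matrix.of_apply]
      by_cases ha : (a : ℕ) = 0
      · rw [if_pos ha]
      · rw [if_neg ha, if_neg (by omega)]⟩
  map_add' w1 w2 := by
    apply Subtype.ext
    ext a b
    simp only [Matrix.add_apply, Matrix.of_apply]
    by_cases ha : (a : ℕ) = 0
    · simp [ha, Fin.val_eq_zero_iff.mp ha]
    · by_cases hb : (b : ℕ) = m0 + 1 <;> simp [ha, hb, mt Fin.val_eq_zero_iff.mpr ha]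
  map_smul' c w := by
    apply Subtype.ext
    ext a b
    simp only [Matrix.smul_apply, Matrix.of_apply, RingHom.id_apply]
    by_cases ha : (a : ℕ) = 0
    · simp [ha, Fin.val_eq_zero_iff.mp ha]
    · by_cases hb : (b : ℕ) = m0 + 1 <;> simp [ha, hb, mt Fin.val_eq_zero_iff.mpr ha]

lemma vecToC_apply (m0 : ℕ) (w : Fin (m0 + 1) → ℂ) (a b : Fin (m0 + 2)) :
    ((vecToC m0 w : Csub (m0 + 2) 0) : Matrix (Fin (m0 + 2)) (Fin (m0 + 2)) ℂ) a b
      = if (a : ℕ) = 0 then 0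
        else if (b : ℕ) = m0 + 1 then w ⟨(a : ℕ) - 1, by have := a.isLt; omega⟩ else 0 := rfl

/-- The algebra homomorphism from Laurent polynomials to matrices sending T m to Jz k m. -/
def JzAlgHom (k : ℕ) : LaurentPolynomial ℂ →ₐ[ℂ] Matrix (Fin k) (Fin k) ℂ :=
  (AddMonoidAlgebra.lift ℂ _ ℤ) ((Units.coeHom _).comp ((zpowersHom _ (Jmat_isUnit k).unit)))

lemma JzAlgHom_T (k : ℕ) (m : ℤ) : JzAlgHom k (LaurentPolynomial.T m) = Jz k m := by
  rw [LaurentPolynomial.T, JzAlgHom]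
  rw [AddMonoidAlgebra.lift_single]
  simp [Jz]

lemma JzAlgHom_sub_one_pow (k : ℕ) (l : ℕ) :
    JzAlgHom k ((LaurentPolynomial.T 1 - 1) ^ l) = Nmat k ^ l := by
  rw [map_pow, map_sub, _root_.map_one, JzAlgHom_T, Jz_one, Jmat]
  congr 1
  abel

/-- Applying a matrix to the last standard basis vector, as a linear map. -/
def applyLast (k : ℕ) : Matrix (Fin (k + 1)) (Fin (k + 1)) ℂ →ₗ[ℂ] (Fin (k + 1) → ℂ) where
  toFun A := A *ᵥ Pi.single ⟨k, by omega⟩ 1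
  map_add' A B := Matrix.add_mulVec A B _
  map_smul' c A := Matrix.smul_mulVec c A _

lemma applyLast_apply (k : ℕ) (A : Matrix (Fin (k + 1)) (Fin (k + 1)) ℂ) (i : Fin (k + 1)) :
    applyLast k A i = A i ⟨k, by omega⟩ := by
  simp [applyLast, Matrix.mulVec_single]

lemma applyLast_mul (k : ℕ) (A B : Matrix (Fin (k + 1)) (Fin (k + 1)) ℂ) :
    applyLast k (A * B) = A *ᵥ applyLast k B := by
  show (A * B) *ᵥ _ = A *ᵥ (B *ᵥ _)
  exact (Matrix.mulVec_mulVec _ _ _).symm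

lemma applyLast_N_pow (k l : ℕ) (hl : l ≤ k) :
    applyLast k (Nmat (k + 1) ^ l) = Pi.single ⟨k - l, by omega⟩ 1 := by
  funext i
  rw [applyLast_apply, Nmat_pow_apply]
  by_cases hc : i = (⟨k - l, by omega⟩ : Fin (k + 1))
  · have hiv : (i : ℕ) = k - l := by rw [hc]
    rw [if_pos (show (i : ℕ) + l = k from by omega), hc, Pi.single_eq_same]
  · rw [if_neg (fun hv => hc (Fin.ext (show (i : ℕ) = k - l from by
        have hv' : (i : ℕ) + l = k := hv; omega))), Pi.single_eq_of_ne hc]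

section Quot
variable (m0 : ℕ)

/-- The generator (T−1)^{m0+1}. -/
def gpol : LaurentPolynomial ℂ := (LaurentPolynomial.T 1 - 1) ^ (m0 + 1)

/-- The distinguished element E₁ⁿ of C(0). -/
def E0el : Csub (m0 + 2) 0 :=
  ⟨Matrix.single (⟨0, by omega⟩ : Fin (m0 + 2)) (⟨m0 + 1, by omega⟩ : Fin (m0 + 2)) 1,
    stdBasisMatrix_mem_Csub (m0 + 2) 0 _ _ (le_refl _)⟩

def lineE0 : Submodule ℂ (Csub (m0 + 2) 0) := Submodule.span ℂ {E0el m0}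

def Phibar : (LaurentPolynomial ℂ ⧸ Ideal.span {gpol m0})
    →ₐ[ℂ] Matrix (Fin (m0 + 1)) (Fin (m0 + 1)) ℂ :=
  Ideal.Quotient.liftₐ _ (JzAlgHom (m0 + 1)) (by
    intro a ha
    rw [Ideal.mem_span_singleton] at ha
    obtain ⟨c, rfl⟩ := ha
    rw [_root_.map_mul, gpol, JzAlgHom_sub_one_pow, Nmat_pow_self, zero_mul])

lemma Phibar_mk (p : LaurentPolynomial ℂ) :
    Phibar m0 (Ideal.Quotient.mk _ p) = JzAlgHom (m0 + 1) p := rfl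

def phiFwd : (LaurentPolynomial ℂ ⧸ Ideal.span {gpol m0})
    →ₗ[ℂ] (Csub (m0 + 2) 0 ⧸ lineE0 m0) :=
  (lineE0 m0).mkQ ∘ₗ (vecToC m0) ∘ₗ (applyLast m0) ∘ₗ (Phibar m0).toLinearMap

lemma phiFwd_mk (p : LaurentPolynomial ℂ) :
    phiFwd m0 (Ideal.Quotient.mk _ p)
      = Submodule.Quotient.mk (vecToC m0 (applyLast m0 (JzAlgHom (m0 + 1) p))) := rfl

lemma phiFwd_pow (l : ℕ) (hl : l ≤ m0) :
    phiFwd m0 (Ideal.Quotient.mk _ ((LaurentPolynomial.T 1 - 1) ^ l))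
      = Submodule.Quotient.mk (vecToC m0 (Pi.single ⟨m0 - l, by omega⟩ 1)) := by
  rw [phiFwd_mk, JzAlgHom_sub_one_pow, applyLast_N_pow m0 l hl]

/-- The span of the classes of the powers (T−1)^l, l ≤ m0. -/
def Wspan : Submodule ℂ (LaurentPolynomial ℂ ⧸ Ideal.span {gpol m0}) :=
  Submodule.span ℂ (Set.range fun l : Fin (m0 + 1) =>
    Ideal.Quotient.mk _ ((LaurentPolynomial.T 1 - 1) ^ (l : ℕ)))

lemma pow_mem_Wspan (l : ℕ) :
    Ideal.Quotient.mk (Ideal.span {gpol m0}) ((LaurentPolynomial.T 1 - 1) ^ l)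
      ∈ Wspan m0 := by
  by_cases hl : l ≤ m0
  · exact Submodule.subset_span ⟨⟨l, by omega⟩, rfl⟩
  · have hz : Ideal.Quotient.mk (Ideal.span {gpol m0}) ((LaurentPolynomial.T 1 - 1) ^ l) = 0 := by
      rw [Ideal.Quotient.eq_zero_iff_mem]
      exact Ideal.mem_span_singleton.mpr
        ⟨(LaurentPolynomial.T 1 - 1) ^ (l - (m0 + 1)), by
          rw [gpol, ← pow_add]; congr 1; omega⟩
    rw [hz]; exact (Wspan m0).zero_mem

lemma T_mul_pow (l : ℕ) :
    (LaurentPolynomial.T 1 : LaurentPolynomial ℂ) * (LaurentPolynomial.T 1 - 1) ^ l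
      = (LaurentPolynomial.T 1 - 1) ^ (l + 1) + (LaurentPolynomial.T 1 - 1) ^ l := by
  rw [pow_succ]
  ring

lemma T_mul_mem_Wspan (w : LaurentPolynomial ℂ ⧸ Ideal.span {gpol m0}) (hw : w ∈ Wspan m0) :
    Ideal.Quotient.mk _ (LaurentPolynomial.T 1) * w ∈ Wspan m0 := by
  induction hw using Submodule.span_induction with
  | mem x hx =>
    obtain ⟨l, rfl⟩ := hx
    rw [← _root_.map_mul, T_mul_pow, map_add]
    exact (Wspan m0).add_mem (pow_mem_Wspan m0 _) (pow_mem_Wspan m0 _)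
  | zero => rw [mul_zero]; exact (Wspan m0).zero_mem
  | add x y _ _ hx hy => rw [mul_add]; exact (Wspan m0).add_mem hx hy
  | smul c x _ hx => rw [mul_smul_comm]; exact (Wspan m0).smul_mem c hx

lemma exists_T_mul_eq_pow (d : ℕ) : ∀ l : ℕ, m0 - l ≤ d →
    ∃ w' ∈ Wspan m0, Ideal.Quotient.mk _ (LaurentPolynomial.T 1) * w'
      = Ideal.Quotient.mk _ ((LaurentPolynomial.T 1 - 1) ^ l) := by
  induction d with
  | zero =>
    intro l hl
    by_cases hbig : m0 + 1 ≤ l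
    · refine ⟨0, (Wspan m0).zero_mem, ?_⟩
      rw [mul_zero]
      symm
      rw [Ideal.Quotient.eq_zero_iff_mem]
      exact Ideal.mem_span_singleton.mpr
        ⟨(LaurentPolynomial.T 1 - 1) ^ (l - (m0 + 1)), by
          rw [gpol, ← pow_add]; congr 1; omega⟩
    · have hlm : l = m0 := by omega
      rw [hlm]
      refine ⟨Ideal.Quotient.mk _ ((LaurentPolynomial.T 1 - 1) ^ m0), pow_mem_Wspan m0 m0, ?_⟩
      rw [← _root_.map_mul, T_mul_pow, map_add]
      have hz : Ideal.Quotient.mk (Ideal.span {gpol m0})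
          ((LaurentPolynomial.T 1 - 1) ^ (m0 + 1)) = 0 := by
        rw [Ideal.Quotient.eq_zero_iff_mem]
        exact Ideal.mem_span_singleton.mpr ⟨1, by rw [gpol, mul_one]⟩
      rw [hz, zero_add]
  | succ d ih =>
    intro l hl
    by_cases hd : m0 - l ≤ d
    · exact ih l hd
    · obtain ⟨w'', hw''W, hw''⟩ := ih (l + 1) (by omega)
      refine ⟨Ideal.Quotient.mk _ ((LaurentPolynomial.T 1 - 1) ^ l) - w'',
        (Wspan m0).sub_mem (pow_mem_Wspan m0 l) hw''W, ?_⟩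
      rw [mul_sub, hw'', ← _root_.map_mul, T_mul_pow, map_add]
      ring

lemma exists_T_mul_eq (w : LaurentPolynomial ℂ ⧸ Ideal.span {gpol m0}) (hw : w ∈ Wspan m0) :
    ∃ w' ∈ Wspan m0, Ideal.Quotient.mk _ (LaurentPolynomial.T 1) * w' = w := by
  induction hw using Submodule.span_induction with
  | mem x hx =>
    obtain ⟨l, rfl⟩ := hx
    exact exists_T_mul_eq_pow m0 (m0 - l) l le_rfl
  | zero => exact ⟨0, (Wspan m0).zero_mem, mul_zero _⟩
  | add x y _ _ hx hy =>
    obtain ⟨w1, hw1, h1⟩ := hx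
    obtain ⟨w2, hw2, h2⟩ := hy
    exact ⟨w1 + w2, (Wspan m0).add_mem hw1 hw2, by rw [mul_add, h1, h2]⟩
  | smul c x _ hx =>
    obtain ⟨w1, hw1, h1⟩ := hx
    exact ⟨c • w1, (Wspan m0).smul_mem c hw1, by rw [mul_smul_comm, h1]⟩

lemma T_mem_Wspan (m : ℤ) :
    Ideal.Quotient.mk (Ideal.span {gpol m0}) (LaurentPolynomial.T m) ∈ Wspan m0 := by
  induction m using Int.induction_on with
  | zero =>
    have h0 : (LaurentPolynomial.T 0 : LaurentPolynomial ℂ)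
        = (LaurentPolynomial.T 1 - 1) ^ 0 := by
      rw [pow_zero, LaurentPolynomial.T_zero]
    rw [h0]
    exact pow_mem_Wspan m0 0
  | succ i ih =>
    rw [show ((i : ℤ) + 1) = 1 + (i : ℤ) from by ring, LaurentPolynomial.T_add, _root_.map_mul]
    exact T_mul_mem_Wspan m0 _ ih
  | pred i ih =>
    obtain ⟨w', hw'W, hw'⟩ := exists_T_mul_eq m0 _ ih
    have hcalc : Ideal.Quotient.mk (Ideal.span {gpol m0}) (LaurentPolynomial.T 1)
        * Ideal.Quotient.mk (Ideal.span {gpol m0}) (LaurentPolynomial.T (-(i : ℤ) - 1))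
        = Ideal.Quotient.mk (Ideal.span {gpol m0}) (LaurentPolynomial.T (-(i : ℤ))) := by
      rw [← _root_.map_mul, ← LaurentPolynomial.T_add]
      congr 1
      ring_nf
    have hu : IsUnit (Ideal.Quotient.mk (Ideal.span {gpol m0}) (LaurentPolynomial.T 1)) :=
      (LaurentPolynomial.isUnit_T 1).map (Ideal.Quotient.mk _)
    have := hu.mul_left_cancel (hcalc.trans hw'.symm)
    rw [this]
    exact hw'W

lemma quot_eq_Wspan (x : LaurentPolynomial ℂ ⧸ Ideal.span {gpol m0}) : x ∈ Wspan m0 := by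
  obtain ⟨p, rfl⟩ := Ideal.Quotient.mk_surjective x
  induction p using LaurentPolynomial.induction_on' with
  | add p q hp hq => rw [map_add]; exact (Wspan m0).add_mem hp hq
  | C_mul_T a b =>
    have hsingle : (LaurentPolynomial.C b * LaurentPolynomial.T a : LaurentPolynomial ℂ)
        = b • LaurentPolynomial.T a := (LaurentPolynomial.smul_eq_C_mul b _).symm
    rw [hsingle, ← Ideal.Quotient.mkₐ_eq_mk ℂ, _root_.map_smul]
    exact (Wspan m0).smul_mem b (by rw [Ideal.Quotient.mkₐ_eq_mk ℂ]; exact T_mem_Wspan m0 a)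

end Quot

lemma stdBasisMatrix_apply' {k : ℕ} (i j a b : Fin k) (c : ℂ) :
    Matrix.single i j c a b = if i = a ∧ j = b then c else 0 := by
  rw [Matrix.single]; rfl

section Adj
variable {Γ : Type*} (α : ℂ) (m0 : ℕ) (h : Γ → ℤ) (z : Γ → ℕ → ℂ) (γ : Γ)

lemma adj_mem (hα : α ≠ 0) (X : Matrix (Fin (m0 + 2)) (Fin (m0 + 2)) ℂ)
    (hX : X ∈ Csub (m0 + 2) 0) :
    rhoMat Γ α (m0 + 2) h z γ * X * (rhoMat Γ α (m0 + 2) h z γ)⁻¹ ∈ Csub (m0 + 2) 0 := by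
  intro a b hb
  have hb' : (b : ℕ) < m0 + 1 := by omega
  rw [Matrix.mul_apply]
  apply Finset.sum_eq_zero
  intro d _
  by_cases hd : (d : ℕ) = m0 + 1
  · rw [rhoInv_lastRow α m0 h z γ hα d b hd, if_neg (by omega), mul_zero]
  · have h0 : (rhoMat Γ α (m0 + 2) h z γ * X) a d = 0 := by
      rw [Matrix.mul_apply]
      apply Finset.sum_eq_zero
      intro c _
      rw [hX c d (by have := d.isLt; omega), mul_zero]
    rw [h0, zero_mul]

lemma adj_entry_last (hα : α ≠ 0) (X : Matrix (Fin (m0 + 2)) (Fin (m0 + 2)) ℂ)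
    (hX : X ∈ Csub (m0 + 2) 0) (a : Fin (m0 + 2)) :
    (rhoMat Γ α (m0 + 2) h z γ * X * (rhoMat Γ α (m0 + 2) h z γ)⁻¹) a ⟨m0 + 1, by omega⟩
      = ∑ c, rhoMat Γ α (m0 + 2) h z γ a c * X c ⟨m0 + 1, by omega⟩ := by
  rw [Matrix.mul_apply, Finset.sum_eq_single (⟨m0 + 1, by omega⟩ : Fin (m0 + 2))]
  · rw [rhoInv_lastRow α m0 h z γ hα _ _ rfl, if_pos rfl, mul_one, Matrix.mul_apply]
  · intro d _ hd
    have h0 : (rhoMat Γ α (m0 + 2) h z γ * X) a d = 0 := by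
      rw [Matrix.mul_apply]
      apply Finset.sum_eq_zero
      intro c _
      rw [hX c d (by
        have := d.isLt
        have hdd : (d : ℕ) ≠ m0 + 1 := fun hv => hd (Fin.ext hv)
        omega), mul_zero]
    rw [h0, zero_mul]
  · simp

lemma adj_E0 (hα : α ≠ 0) :
    rhoMat Γ α (m0 + 2) h z γ * (E0el m0).val * (rhoMat Γ α (m0 + 2) h z γ)⁻¹
      = α ^ h γ • (E0el m0).val := by
  ext a b
  by_cases hb : (b : ℕ) = m0 + 1
  · have hb2 : b = (⟨m0 + 1, Nat.lt_succ_self _⟩ : Fin (m0 + 2)) := Fin.ext hb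
    rw [hb2, adj_entry_last α m0 h z γ hα _ (E0el m0).2 a,
      Finset.sum_eq_single (⟨0, by omega⟩ : Fin (m0 + 2))]
    · rw [show (E0el m0).val = Matrix.single (⟨0, by omega⟩ : Fin (m0 + 2))
          (⟨m0 + 1, by omega⟩ : Fin (m0 + 2)) 1 from rfl,
        stdBasisMatrix_apply', if_pos ⟨rfl, rfl⟩, mul_one,
        rho_col0 α m0 h z γ a _ rfl, Matrix.smul_apply, stdBasisMatrix_apply']
      by_cases ha : (a : ℕ) = 0
      · rw [if_pos ha, if_pos ⟨Fin.ext ha.symm, rfl⟩, smul_eq_mul, mul_one]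
      · rw [if_neg ha, if_neg (fun hc => ha (congrArg Fin.val hc.1).symm), smul_eq_mul, mul_zero]
    · intro d _ hd
      rw [show (E0el m0).val = Matrix.single (⟨0, by omega⟩ : Fin (m0 + 2))
          (⟨m0 + 1, by omega⟩ : Fin (m0 + 2)) 1 from rfl,
        stdBasisMatrix_apply', if_neg (fun hc => hd hc.1.symm), mul_zero]
    · simp
  · rw [adj_mem α m0 h z γ hα _ (E0el m0).2 a b (by omega), Matrix.smul_apply,
      show (E0el m0).val = Matrix.single (⟨0, by omega⟩ : Fin (m0 + 2))
          (⟨m0 + 1, by omega⟩ : Fin (m0 + 2)) 1 from rfl,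
      stdBasisMatrix_apply', if_neg (fun hc => hb (congrArg Fin.val hc.2).symm),
      smul_eq_mul, mul_zero]

def adjC (hα : α ≠ 0) : Csub (m0 + 2) 0 →ₗ[ℂ] Csub (m0 + 2) 0 where
  toFun X := ⟨rhoMat Γ α (m0 + 2) h z γ * X.val * (rhoMat Γ α (m0 + 2) h z γ)⁻¹,
    adj_mem α m0 h z γ hα X.val X.2⟩
  map_add' X Y := by
    apply Subtype.ext
    show rhoMat Γ α (m0 + 2) h z γ * (X + Y).val * (rhoMat Γ α (m0 + 2) h z γ)⁻¹
      = rhoMat Γ α (m0 + 2) h z γ * X.val * (rhoMat Γ α (m0 + 2) h z γ)⁻¹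
        + rhoMat Γ α (m0 + 2) h z γ * Y.val * (rhoMat Γ α (m0 + 2) h z γ)⁻¹
    rw [Submodule.coe_add, Matrix.mul_add, Matrix.add_mul]
  map_smul' c X := by
    apply Subtype.ext
    show rhoMat Γ α (m0 + 2) h z γ * (c • X).val * (rhoMat Γ α (m0 + 2) h z γ)⁻¹
      = c • (rhoMat Γ α (m0 + 2) h z γ * X.val * (rhoMat Γ α (m0 + 2) h z γ)⁻¹)
    rw [SetLike.val_smul, Matrix.mul_smul, Matrix.smul_mul]

lemma adjC_line (hα : α ≠ 0) :
    lineE0 m0 ≤ (lineE0 m0).comap (adjC α m0 h z γ hα) := by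
  rw [lineE0, Submodule.span_le]
  intro x hx
  rw [Set.mem_singleton_iff] at hx
  subst hx
  have : adjC α m0 h z γ hα (E0el m0) = α ^ h γ • E0el m0 :=
    Subtype.ext (adj_E0 α m0 h z γ hα)
  show adjC α m0 h z γ hα (E0el m0) ∈ lineE0 m0
  rw [this]
  exact Submodule.smul_mem _ _ (Submodule.mem_span_singleton_self _)

def adjQ (hα : α ≠ 0) :
    (Csub (m0 + 2) 0 ⧸ lineE0 m0) →ₗ[ℂ] (Csub (m0 + 2) 0 ⧸ lineE0 m0) :=
  Submodule.mapQ _ _ (adjC α m0 h z γ hα) (adjC_line α m0 h z γ hα)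

lemma adj_vecToC (hα : α ≠ 0) (w : Fin (m0 + 1) → ℂ) :
    adjC α m0 h z γ hα (vecToC m0 w) - vecToC m0 (Jz (m0 + 1) (h γ) *ᵥ w) ∈ lineE0 m0 := by
  have key : adjC α m0 h z γ hα (vecToC m0 w) - vecToC m0 (Jz (m0 + 1) (h γ) *ᵥ w)
      = ((adjC α m0 h z γ hα (vecToC m0 w)).val ⟨0, Nat.succ_pos _⟩ ⟨m0 + 1, Nat.lt_succ_self _⟩
          - (vecToC m0 (Jz (m0 + 1) (h γ) *ᵥ w)).val ⟨0, Nat.succ_pos _⟩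
              ⟨m0 + 1, Nat.lt_succ_self _⟩)
        • E0el m0 := by
    apply Subtype.ext
    ext a b
    simp only [AddSubgroupClass.coe_sub, Matrix.sub_apply, SetLike.val_smul, Matrix.smul_apply,
      smul_eq_mul]
    rw [show (E0el m0).val = Matrix.single (⟨0, Nat.succ_pos _⟩ : Fin (m0 + 2))
        (⟨m0 + 1, Nat.lt_succ_self _⟩ : Fin (m0 + 2)) 1 from rfl, stdBasisMatrix_apply']
    by_cases hb : (b : ℕ) = m0 + 1
    · have hb2 : b = (⟨m0 + 1, Nat.lt_succ_self _⟩ : Fin (m0 + 2)) := Fin.ext hb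
      rw [hb2]
      induction a using Fin.cases with
      | zero =>
        rw [if_pos ⟨Fin.ext (Fin.val_zero _).symm, rfl⟩, mul_one,
          show (0 : Fin (m0 + 2)) = (⟨0, Nat.succ_pos _⟩ : Fin (m0 + 2)) from
            Fin.ext (Fin.val_zero _)]
      | succ a' =>
        rw [if_neg (fun hc => by
          have := congrArg Fin.val hc.1
          simp [Fin.val_succ] at this), mul_zero]
        have hXlast := adj_entry_last α m0 h z γ hα (vecToC m0 w).val (vecToC m0 w).2 a'.succ
        rw [show ((adjC α m0 h z γ hα (vecToC m0 w)).val : Matrix (Fin (m0+2)) (Fin (m0+2)) ℂ)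
            = rhoMat Γ α (m0 + 2) h z γ * (vecToC m0 w).val * (rhoMat Γ α (m0 + 2) h z γ)⁻¹
            from rfl, hXlast, Fin.sum_univ_succ]
        rw [show ((vecToC m0 w).val 0 ⟨m0 + 1, Nat.lt_succ_self _⟩ : ℂ) = 0 from by
          rw [vecToC_apply, if_pos (Fin.val_zero _)], mul_zero, zero_add]
        have hterm : ∀ c : Fin (m0 + 1),
            rhoMat Γ α (m0 + 2) h z γ a'.succ c.succ
              * (vecToC m0 w).val c.succ ⟨m0 + 1, Nat.lt_succ_self _⟩
            = Jz (m0 + 1) (h γ) a' c * w c := by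
          intro c
          rw [vecToC_apply, if_neg (by simp [Fin.val_succ]), if_pos rfl, rho_block]
          all_goals congr 1
          all_goals exact congrArg w (Fin.ext (by simp [Fin.val_succ]))
        rw [Finset.sum_congr rfl (fun c _ => hterm c)]
        rw [vecToC_apply, if_neg (by simp [Fin.val_succ]), if_pos rfl]
        rw [show (⟨((a'.succ : Fin (m0 + 2)) : ℕ) - 1, by have := a'.succ.isLt; omega⟩
            : Fin (m0 + 1)) = a' from Fin.ext (by simp [Fin.val_succ])]
        rw [Matrix.mulVec, dotProduct]
        exact sub_self _
    · rw [(adjC α m0 h z γ hα (vecToC m0 w)).2 a b (by omega),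
        (vecToC m0 (Jz (m0 + 1) (h γ) *ᵥ w)).2 a b (by omega),
        if_neg (fun hc => hb (congrArg Fin.val hc.2).symm), mul_zero, sub_zero]
  rw [key]
  exact Submodule.smul_mem _ _ (Submodule.mem_span_singleton_self _)

lemma adjQ_vecToC (hα : α ≠ 0) (w : Fin (m0 + 1) → ℂ) :
    adjQ α m0 h z γ hα (Submodule.Quotient.mk (vecToC m0 w))
      = Submodule.Quotient.mk (vecToC m0 (Jz (m0 + 1) (h γ) *ᵥ w)) := by
  rw [adjQ, Submodule.mapQ_apply, Submodule.Quotient.eq]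
  exact adj_vecToC α m0 h z γ hα w

lemma intertwine (hα : α ≠ 0) (q : LaurentPolynomial ℂ ⧸ Ideal.span {gpol m0}) :
    phiFwd m0 (Ideal.Quotient.mk _ (LaurentPolynomial.T (h γ)) * q)
      = adjQ α m0 h z γ hα (phiFwd m0 q) := by
  have hq := quot_eq_Wspan m0 q
  induction hq using Submodule.span_induction with
  | mem x hx =>
    obtain ⟨l, rfl⟩ := hx
    rw [← _root_.map_mul, phiFwd_mk, phiFwd_mk, _root_.map_mul, JzAlgHom_T,
      JzAlgHom_sub_one_pow]
    rw [applyLast_mul]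
    rw [adjQ_vecToC α m0 h z γ hα]
  | zero => rw [mul_zero, _root_.map_zero, _root_.map_zero]
  | add x y _ _ hx hy =>
    rw [mul_add, _root_.map_add, hx, hy, ← _root_.map_add, ← _root_.map_add]
  | smul c x _ hx =>
    rw [mul_smul_comm, _root_.map_smul, hx, ← _root_.map_smul, ← _root_.map_smul]

end Adj

lemma vecToC_single_entry (m0 : ℕ) (j j' : Fin (m0 + 1)) :
    ((vecToC m0 (Pi.single j' 1) : Csub (m0 + 2) 0) : Matrix (Fin (m0 + 2)) (Fin (m0 + 2)) ℂ)
        j.succ ⟨m0 + 1, Nat.lt_succ_self _⟩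
      = if j' = j then 1 else 0 := by
  rw [vecToC_apply, if_neg (by simp [Fin.val_succ]), if_pos rfl, Pi.single_apply]
  by_cases hc : j' = j
  · rw [if_pos (by rw [hc]; exact Fin.ext (by simp [Fin.val_succ])), if_pos hc]
  · rw [if_neg (fun hv => hc (hv.symm.trans (Fin.ext (by simp [Fin.val_succ])))), if_neg hc]

lemma vecToC_single (m0 : ℕ) (j : Fin (m0 + 1)) :
    ((vecToC m0 (Pi.single j 1) : Csub (m0 + 2) 0) : Matrix (Fin (m0 + 2)) (Fin (m0 + 2)) ℂ)
      = Matrix.single (j.succ : Fin (m0 + 2)) ⟨m0 + 1, Nat.lt_succ_self _⟩ 1 := by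
  ext a b
  rw [vecToC_apply, stdBasisMatrix_apply']
  by_cases ha : (a : ℕ) = 0
  · rw [if_pos ha, if_neg (fun hc => by
      have := congrArg Fin.val hc.1
      simp [Fin.val_succ, ha] at this)]
  · rw [if_neg ha]
    by_cases hb : (b : ℕ) = m0 + 1
    · rw [if_pos hb, Pi.single_apply]
      by_cases hc : (a : ℕ) = (j : ℕ) + 1
      · rw [if_pos (Fin.ext (by simp; omega)), if_pos ⟨Fin.ext (by simp [Fin.val_succ, hc]),
          Fin.ext (by simp [hb])⟩]
      · rw [if_neg (fun hv => hc (by have := congrArg Fin.val hv; simp at this; omega)),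
          if_neg (fun hv => hc (by have := congrArg Fin.val hv.1; simp [Fin.val_succ] at this; omega))]
    · rw [if_neg hb, if_neg (fun hc => hb (by have := congrArg Fin.val hc.2; simp at this; omega))]

lemma phiFwd_inj (m0 : ℕ) : Function.Injective (phiFwd m0) := by
  rw [injective_iff_map_eq_zero]
  intro x hx
  obtain ⟨c, hc⟩ := (Submodule.mem_span_range_iff_exists_fun ℂ).mp (quot_eq_Wspan m0 x)
  have hphi : (lineE0 m0).mkQ (∑ l : Fin (m0 + 1),
      c l • vecToC m0 (Pi.single (⟨m0 - (l : ℕ), by omega⟩ : Fin (m0 + 1)) 1)) = 0 := by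
    rw [map_sum]
    have e : ∀ l : Fin (m0 + 1), (lineE0 m0).mkQ
        (c l • vecToC m0 (Pi.single (⟨m0 - (l : ℕ), by omega⟩ : Fin (m0 + 1)) 1))
        = c l • phiFwd m0 (Ideal.Quotient.mk _ ((LaurentPolynomial.T 1 - 1) ^ (l : ℕ))) := by
      intro l
      rw [_root_.map_smul, phiFwd_pow m0 (l : ℕ) (by omega)]
      rfl
    rw [Finset.sum_congr rfl (fun l _ => e l)]
    simp_rw [← _root_.map_smul, ← map_sum, hc, hx]
  have h0 : (∑ l : Fin (m0 + 1),
      c l • vecToC m0 (Pi.single (⟨m0 - (l : ℕ), by omega⟩ : Fin (m0 + 1)) 1)) ∈ lineE0 m0 := by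
    rwa [← Submodule.Quotient.mk_eq_zero]
  obtain ⟨d, hd⟩ := Submodule.mem_span_singleton.mp h0
  have hc0 : ∀ l : Fin (m0 + 1), c l = 0 := by
    intro l
    have hentry := congrArg (fun X : Csub (m0 + 2) 0 =>
      (X : Matrix (Fin (m0 + 2)) (Fin (m0 + 2)) ℂ)
        ((⟨m0 - (l : ℕ), by omega⟩ : Fin (m0 + 1)).succ) ⟨m0 + 1, Nat.lt_succ_self _⟩) hd
    rw [SetLike.val_smul, Matrix.smul_apply,
      show (E0el m0).val = Matrix.single (⟨0, Nat.succ_pos _⟩ : Fin (m0 + 2))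
        (⟨m0 + 1, Nat.lt_succ_self _⟩ : Fin (m0 + 2)) 1 from rfl, stdBasisMatrix_apply',
      if_neg (fun hv => by
        have := congrArg Fin.val hv.1
        simp [Fin.val_succ] at this), smul_zero] at hentry
    rw [AddSubmonoidClass.coe_finset_sum, Matrix.sum_apply] at hentry
    have hterm : ∀ l' : Fin (m0 + 1),
        (((c l' • vecToC m0 (Pi.single (⟨m0 - (l' : ℕ), by omega⟩ : Fin (m0 + 1)) 1))
            : Csub (m0 + 2) 0) : Matrix (Fin (m0 + 2)) (Fin (m0 + 2)) ℂ)
          ((⟨m0 - (l : ℕ), by omega⟩ : Fin (m0 + 1)).succ) ⟨m0 + 1, Nat.lt_succ_self _⟩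
        = if l' = l then c l else 0 := by
      intro l'
      rw [SetLike.val_smul, Matrix.smul_apply, vecToC_single_entry, smul_eq_mul]
      by_cases hc2 : l' = l
      · rw [if_pos (by rw [hc2]), if_pos hc2, hc2, mul_one]
      · rw [if_neg (fun hv => hc2 (Fin.ext (by
          have := congrArg Fin.val hv
          have h1 := l.isLt
          have h2 := l'.isLt
          simp at this
          omega))), if_neg hc2, mul_zero]
    rw [Finset.sum_congr rfl (fun l' _ => hterm l'), Finset.sum_ite_eq' Finset.univ l
      (fun _ => c l), if_pos (Finset.mem_univ l)] at hentry
    exact hentry.symm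
  rw [← hc]
  simp [hc0]

lemma phiFwd_surj (m0 : ℕ) : Function.Surjective (phiFwd m0) := by
  intro y
  obtain ⟨X, rfl⟩ := Submodule.mkQ_surjective _ y
  set w : Fin (m0 + 1) → ℂ :=
    fun i => (X : Matrix (Fin (m0 + 2)) (Fin (m0 + 2)) ℂ) i.succ ⟨m0 + 1, Nat.lt_succ_self _⟩
    with hw
  have hXw : (lineE0 m0).mkQ X = (lineE0 m0).mkQ (vecToC m0 w) := by
    show Submodule.Quotient.mk X = Submodule.Quotient.mk (vecToC m0 w)
    rw [Submodule.Quotient.eq]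
    have key : X - vecToC m0 w
        = ((X : Matrix (Fin (m0 + 2)) (Fin (m0 + 2)) ℂ) ⟨0, Nat.succ_pos _⟩
            ⟨m0 + 1, Nat.lt_succ_self _⟩) • E0el m0 := by
      apply Subtype.ext
      ext a b
      simp only [AddSubgroupClass.coe_sub, Matrix.sub_apply, SetLike.val_smul,
        Matrix.smul_apply, smul_eq_mul]
      rw [show (E0el m0).val = Matrix.single (⟨0, Nat.succ_pos _⟩ : Fin (m0 + 2))
          (⟨m0 + 1, Nat.lt_succ_self _⟩ : Fin (m0 + 2)) 1 from rfl, stdBasisMatrix_apply']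
      by_cases hb : (b : ℕ) = m0 + 1
      · have hb2 : b = (⟨m0 + 1, Nat.lt_succ_self _⟩ : Fin (m0 + 2)) := Fin.ext hb
        rw [hb2]
        induction a using Fin.cases with
        | zero =>
          rw [vecToC_apply, if_pos (Fin.val_zero _), sub_zero,
            if_pos ⟨Fin.ext (Fin.val_zero _).symm, rfl⟩, mul_one,
            show (0 : Fin (m0 + 2)) = (⟨0, Nat.succ_pos _⟩ : Fin (m0 + 2)) from
              Fin.ext (Fin.val_zero _)]
        | succ a' =>
          rw [vecToC_apply, if_neg (by simp [Fin.val_succ]), if_pos rfl,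
            if_neg (fun hc => by
              have := congrArg Fin.val hc.1
              simp [Fin.val_succ] at this), mul_zero, hw]
          simp only
          rw [show (⟨((a'.succ : Fin (m0 + 2)) : ℕ) - 1, by have := a'.succ.isLt; omega⟩
              : Fin (m0 + 1)) = a' from Fin.ext (by simp [Fin.val_succ])]
          exact sub_self _
      · rw [X.2 a b (by omega), vecToC_apply,
          if_neg (fun hc : ((⟨0, Nat.succ_pos _⟩ : Fin (m0 + 2)) = a
              ∧ (⟨m0 + 1, Nat.lt_succ_self _⟩ : Fin (m0 + 2)) = b) =>
            hb (by have := congrArg Fin.val hc.2; simp at this; omega)),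
          mul_zero]
        by_cases ha : (a : ℕ) = 0
        · rw [if_pos ha, sub_zero]
        · rw [if_neg ha, if_neg hb, sub_zero]
    rw [key]
    exact Submodule.smul_mem _ _ (Submodule.mem_span_singleton_self _)
  refine ⟨∑ i : Fin (m0 + 1), w i • Ideal.Quotient.mk _
      ((LaurentPolynomial.T 1 - 1) ^ (m0 - (i : ℕ))), ?_⟩
  rw [map_sum]
  have e : ∀ i : Fin (m0 + 1),
      phiFwd m0 (w i • Ideal.Quotient.mk _ ((LaurentPolynomial.T 1 - 1) ^ (m0 - (i : ℕ))))
      = (lineE0 m0).mkQ (vecToC m0 (Pi.single i (w i))) := by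
    intro i
    rw [_root_.map_smul, phiFwd_pow m0 (m0 - (i : ℕ)) (by omega)]
    have h1 : (⟨m0 - (m0 - (i : ℕ)), by omega⟩ : Fin (m0 + 1)) = i :=
      Fin.ext (by have := i.isLt; simp; omega)
    rw [h1, show (Submodule.Quotient.mk (vecToC m0 (Pi.single i 1))
        : Csub (m0 + 2) 0 ⧸ lineE0 m0) = (lineE0 m0).mkQ (vecToC m0 (Pi.single i 1)) from rfl,
      ← _root_.map_smul, ← _root_.map_smul]
    congr 1
    rw [← Pi.single_smul, smul_eq_mul, mul_one]
  rw [Finset.sum_congr rfl (fun i _ => e i), ← map_sum, ← map_sum]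
  rw [show (∑ i : Fin (m0 + 1), Pi.single i (w i)) = w from Finset.univ_sum_single w]
  exact hXw.symm

/-- C(0) and the line ℂ·E₁ⁿ are invariant under the adjoint action
`γ·X = ϱ(γ) X ϱ(γ)⁻¹` (indeed `γ·E₁ⁿ = α^{h(γ)} E₁ⁿ`), and there is a ℂ-linear
isomorphism `φ : ℂ[t^{±1}]/((t−1)^{n−1}) ≃ C(0)/(ℂ·E₁ⁿ)` sending the class of
`(t−1)^l` to the class of `E_{n−l}ⁿ` for `0 ≤ l ≤ n−2` and intertwining
multiplication by `t^{h(γ)}` with the induced adjoint action of γ. -/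
theorem stmt10 (Γ : Type*) [Group Γ] (h : Γ → ℤ)
    (hh : ∀ a b : Γ, h (a * b) = h a + h b)
    (α : ℂ) (hα : α ≠ 0) (n : ℕ) (hn : 2 ≤ n) (z : Γ → ℕ → ℂ)
    (hz : ∀ k : ℕ, 1 ≤ k → k ≤ n - 1 → ∀ γ₁ γ₂ : Γ,
      z (γ₁ * γ₂) k = z γ₁ k + α ^ h γ₁ * z γ₂ k
        + ∑ i ∈ Finset.Icc 1 (k - 1), z γ₁ i * gbinom (h γ₂) (k - i)) :
    (∀ γ : Γ, ∀ X ∈ Csub n 0,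
        rhoMat Γ α n h z γ * X * (rhoMat Γ α n h z γ)⁻¹ ∈ Csub n 0)
    ∧ (∀ γ : Γ,
        rhoMat Γ α n h z γ
            * Matrix.single (⟨0, by omega⟩ : Fin n) (⟨n - 1, by omega⟩ : Fin n)
                (1 : ℂ)
            * (rhoMat Γ α n h z γ)⁻¹
          = α ^ h γ
              • Matrix.single (⟨0, by omega⟩ : Fin n) (⟨n - 1, by omega⟩ : Fin n)
                  (1 : ℂ))
    ∧ ∃ φ : (LaurentPolynomial ℂ ⧸
          Ideal.span {((LaurentPolynomial.T 1 : LaurentPolynomial ℂ) - 1) ^ (n - 1)})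
        ≃ₗ[ℂ]
        (Csub n 0 ⧸ Submodule.span ℂ
          {(⟨Matrix.single (⟨0, by omega⟩ : Fin n) (⟨n - 1, by omega⟩ : Fin n)
              (1 : ℂ),
            stdBasisMatrix_mem_Csub n 0 _ _ (le_refl _)⟩ : Csub n 0)}),
      (∀ l : ℕ, l ≤ n - 2 →
        φ (Ideal.Quotient.mk _
            (((LaurentPolynomial.T 1 : LaurentPolynomial ℂ) - 1) ^ l))
          = Submodule.Quotient.mk
              ⟨Matrix.single (⟨n - 1 - l, by omega⟩ : Fin n)
                  (⟨n - 1, by omega⟩ : Fin n) (1 : ℂ),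
                stdBasisMatrix_mem_Csub n 0 _ _ (le_refl _)⟩)
      ∧ (∀ (γ : Γ) p (X : Csub n 0),
          φ p = Submodule.Quotient.mk X →
          ∀ hc : rhoMat Γ α n h z γ * (X : Matrix (Fin n) (Fin n) ℂ)
              * (rhoMat Γ α n h z γ)⁻¹ ∈ Csub n 0,
            φ (Ideal.Quotient.mk _ (LaurentPolynomial.T (h γ)) * p)
              = Submodule.Quotient.mk ⟨_, hc⟩) := by
  obtain ⟨m0, rfl⟩ : ∃ m0, n = m0 + 2 := ⟨n - 2, by omega⟩
  refine ⟨fun γ X hX => adj_mem α m0 h z γ hα X hX,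
    fun γ => adj_E0 α m0 h z γ hα, ?_⟩
  have hbij : Function.Bijective (phiFwd m0) := ⟨phiFwd_inj m0, phiFwd_surj m0⟩
  refine ⟨LinearEquiv.ofBijective (phiFwd m0) hbij, ?_, ?_⟩
  · intro l hl
    have hl' : l ≤ m0 := by omega
    have h1 : (vecToC m0 (Pi.single (⟨m0 - l, by omega⟩ : Fin (m0 + 1)) 1))
        = (⟨Matrix.single (⟨m0 + 2 - 1 - l, by omega⟩ : Fin (m0 + 2))
            (⟨m0 + 2 - 1, by omega⟩ : Fin (m0 + 2)) (1 : ℂ),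
          stdBasisMatrix_mem_Csub (m0 + 2) 0 _ _ (le_refl _)⟩ : Csub (m0 + 2) 0) := by
      apply Subtype.ext
      rw [vecToC_single,
        show (((⟨m0 - l, by omega⟩ : Fin (m0 + 1)).succ) : Fin (m0 + 2))
            = (⟨m0 + 2 - 1 - l, by omega⟩ : Fin (m0 + 2)) from
          Fin.ext (by simp [Fin.val_succ]; omega)]
      rfl
    show phiFwd m0 (Ideal.Quotient.mk (Ideal.span {gpol m0}) ((LaurentPolynomial.T 1 - 1) ^ l))
        = (Submodule.Quotient.mk
            (⟨Matrix.single (⟨m0 + 2 - 1 - l, by omega⟩ : Fin (m0 + 2))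
                (⟨m0 + 2 - 1, by omega⟩ : Fin (m0 + 2)) (1 : ℂ),
              stdBasisMatrix_mem_Csub (m0 + 2) 0 _ _ (le_refl _)⟩ : Csub (m0 + 2) 0)
          : Csub (m0 + 2) 0 ⧸ lineE0 m0)
    rw [phiFwd_pow m0 l hl', h1]
  · intro γ p X hX hc
    have hX' : phiFwd m0 p = Submodule.Quotient.mk X := hX
    have h2 : phiFwd m0 (Ideal.Quotient.mk
          (Ideal.span {((LaurentPolynomial.T 1 : LaurentPolynomial ℂ) - 1) ^ (m0 + 2 - 1)})
          (LaurentPolynomial.T (h γ)) * p)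
        = adjQ α m0 h z γ hα (phiFwd m0 p) := intertwine α m0 h z γ hα p
    exact h2.trans (by
      rw [hX', adjQ, Submodule.mapQ_apply]
      exact congrArg Submodule.Quotient.mk (Subtype.ext rfl))

end
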